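/- Let A be a k×k symmetric positive definite matrix with A·1 = 1 and M = [[A, -1],[-1^T, k]] as above. Then for all i,j ∈ {1,...,k}, (M^+)_{i,j} = (A^{-1})_{i,j} − 2/(1+k) + k/(1+k)^2 = (A^{-1})_{i,j} − (k+2)/(1+k)^2. -/

import Mathlib

open Matrix Finset

/-- `B` is the Moore–Penrose pseudoinverse of `A`. -/
def IsMoorePenrose {n : Type*} [Fintype n] (A B : Matrix n n ℝ) : Prop :=
  A * B * A = A ∧ B * A * B = B ∧ (A * B)ᵀ = A * B ∧ (B * A)ᵀ = B * A

theorem mp_unique {n : Type*} [Fintype n] (A B C : Matrix n n ℝ)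
    (hB : IsMoorePenrose A B) (hC : IsMoorePenrose A C) : B = C := by
  obtain ⟨hB1, hB2, hB3, hB4⟩ := hB
  obtain ⟨hC1, hC2, hC3, hC4⟩ := hC
  have hAB : A * B = A * C := by
    calc A * B = (A * B)ᵀ := hB3.symm
      _ = Bᵀ * Aᵀ := transpose_mul _ _
      _ = Bᵀ * (A * C * A)ᵀ := by rw [hC1]
      _ = Bᵀ * (Aᵀ * (A * C)ᵀ) := by rw [transpose_mul]
      _ = (Bᵀ * Aᵀ) * (A * C)ᵀ := by rw [mul_assoc]
      _ = (A * B)ᵀ * (A * C)ᵀ := by rw [← transpose_mul A B]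
      _ = (A * B) * (A * C) := by rw [hB3, hC3]
      _ = A * B * A * C := by rw [← mul_assoc]
      _ = A * C := by rw [hB1]
  have hAt : Aᵀ = (C * A)ᵀ * Aᵀ := by
    rw [← transpose_mul, ← mul_assoc, hC1]
  have hBA : B * A = C * A := by
    calc B * A = (B * A)ᵀ := hB4.symm
      _ = Aᵀ * Bᵀ := transpose_mul _ _
      _ = ((C * A)ᵀ * Aᵀ) * Bᵀ := by rw [← hAt]
      _ = (C * A)ᵀ * (Aᵀ * Bᵀ) := mul_assoc _ _ _
      _ = (C * A)ᵀ * (B * A)ᵀ := by rw [← transpose_mul B A]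
      _ = (C * A) * (B * A) := by rw [hC4, hB4]
      _ = C * (A * B * A) := by rw [mul_assoc, ← mul_assoc A B A]
      _ = C * A := by rw [hB1]
  calc B = B * A * B := hB2.symm
    _ = B * (A * B) := mul_assoc _ _ _
    _ = B * (A * C) := by rw [hAB]
    _ = (B * A) * C := (mul_assoc _ _ _).symm
    _ = (C * A) * C := by rw [hBA]
    _ = C := hC2

/-- For `A` symmetric positive definite with `A·1 = 1` and `M = [[A, -1],[-1ᵀ, k]]`,
`(M⁺)_{i,j} = (A⁻¹)_{i,j} − 2/(1+k) + k/(1+k)² = (A⁻¹)_{i,j} − (k+2)/(1+k)²`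
for all `i, j ∈ {1,…,k}`. -/
theorem stmt_17 (k : ℕ) (A : Matrix (Fin k) (Fin k) ℝ) (hA : A.PosDef)
    (hA1 : A *ᵥ (fun _ => (1 : ℝ)) = fun _ => (1 : ℝ))
    (P : Matrix (Fin k ⊕ Unit) (Fin k ⊕ Unit) ℝ)
    (hP : IsMoorePenrose
      (Matrix.fromBlocks A (fun _ _ => -1) (fun _ _ => -1) (fun _ _ => (k : ℝ))) P)
    (i j : Fin k) :
    P (Sum.inl i) (Sum.inl j) = A⁻¹ i j - 2 / (1 + (k : ℝ)) + (k : ℝ) / (1 + (k : ℝ)) ^ 2 ∧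
      P (Sum.inl i) (Sum.inl j) = A⁻¹ i j - ((k : ℝ) + 2) / (1 + (k : ℝ)) ^ 2 := by
  classical
  set r : ℝ := 1 + (k : ℝ) with hrdef
  have hr0 : r ≠ 0 := by positivity
  set M : Matrix (Fin k ⊕ Unit) (Fin k ⊕ Unit) ℝ :=
    Matrix.fromBlocks A (fun _ _ => -1) (fun _ _ => -1) (fun _ _ => (k : ℝ)) with hMdef
  have hMdef' : M = Matrix.fromBlocks A (Matrix.of fun _ _ => -1) (Matrix.of fun _ _ => -1)
      (Matrix.of fun _ _ => (k : ℝ)) := rfl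
  set Q : Matrix (Fin k ⊕ Unit) (Fin k ⊕ Unit) ℝ :=
    Matrix.fromBlocks (Matrix.of fun i j => A⁻¹ i j - ((k : ℝ) + 2) / r ^ 2)
      (Matrix.of fun _ _ => -(1 / r ^ 2)) (Matrix.of fun _ _ => -(1 / r ^ 2))
      (Matrix.of fun _ _ => (k : ℝ) / r ^ 2) with hQdef
  set E : Matrix (Fin k ⊕ Unit) (Fin k ⊕ Unit) ℝ := Matrix.of fun _ _ => 1 with hEdef
  -- basic facts about A
  have hdet : IsUnit A.det := hA.det_pos.ne'.isUnit
  have hAAinv : A * A⁻¹ = 1 := Matrix.mul_nonsing_inv A hdet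
  have hAinvA : A⁻¹ * A = 1 := Matrix.nonsing_inv_mul A hdet
  have hsymA : Aᵀ = A := by
    have := hA.isHermitian.eq
    simpa [Matrix.conjTranspose_eq_transpose_of_trivial] using this
  have hsymAinv : A⁻¹ᵀ = A⁻¹ := by rw [Matrix.transpose_nonsing_inv, hsymA]
  have hAe : ∀ i j, A i j = A j i := fun i j => by
    conv_lhs => rw [← hsymA]
    simp
  have hAinve : ∀ i j, A⁻¹ i j = A⁻¹ j i := fun i j => by
    conv_lhs => rw [← hsymAinv]
    simp
  have hrowA : ∀ i, ∑ l, A i l = 1 := fun i => by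
    have := congrFun hA1 i
    simpa [Matrix.mulVec, dotProduct] using this
  have hcolA : ∀ l, ∑ i, A i l = 1 := fun l => by
    have : ∑ i, A i l = ∑ i, A l i := Finset.sum_congr rfl fun i _ => hAe i l
    rw [this, hrowA]
  have hAinv1 : A⁻¹ *ᵥ (fun _ => (1 : ℝ)) = fun _ => (1 : ℝ) := by
    have h := congrArg (fun v => A⁻¹ *ᵥ v) hA1
    simpa [Matrix.mulVec_mulVec, hAinvA] using h.symm
  have hrowAinv : ∀ i, ∑ l, A⁻¹ i l = 1 := fun i => by
    have := congrFun hAinv1 i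
    simpa [Matrix.mulVec, dotProduct] using this
  have hcolAinv : ∀ l, ∑ i, A⁻¹ i l = 1 := fun l => by
    have : ∑ i, A⁻¹ i l = ∑ i, A⁻¹ l i := Finset.sum_congr rfl fun i _ => hAinve i l
    rw [this, hrowAinv]
  -- the key product
  have hs1 : ∀ x y, ∑ l, A x l * A⁻¹ l y = if x = y then (1:ℝ) else 0 := by
    intro x y
    rw [← Matrix.mul_apply, hAAinv, Matrix.one_apply]
  have hMQ : M * Q = 1 - r⁻¹ • E := by
    ext x y
    rcases x with x | x <;> rcases y with y | y <;>
      simp only [hMdef', hQdef, hEdef, Matrix.mul_apply, Fintype.sum_sum_type,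
        Matrix.fromBlocks_apply₁₁, Matrix.fromBlocks_apply₁₂, Matrix.fromBlocks_apply₂₁,
        Matrix.fromBlocks_apply₂₂, Matrix.of_apply, Finset.univ_unique,
        Finset.sum_singleton, Matrix.sub_apply, Matrix.smul_apply, Matrix.one_apply,
        smul_eq_mul, mul_sub, Finset.sum_sub_distrib] <;>
      simp [hs1, hrowA, hrowAinv, hcolA, hcolAinv, ← Finset.sum_mul, Finset.sum_const,
        Finset.card_univ, hrdef]
    · rcases eq_or_ne x y with h | h <;> simp [h] <;> field_simp <;> ring
    · field_simp
      ring
    · field_simp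
      ring
    · field_simp
      ring
  have hEsym : Eᵀ = E := by
    ext x y
    simp [hEdef]
  have hMsym : Mᵀ = M := by
    ext x y
    rcases x with x | x <;> rcases y with y | y <;>
      simp [hMdef', Matrix.transpose_apply]
    exact hAe y x
  have hQsym : Qᵀ = Q := by
    ext x y
    rcases x with x | x <;> rcases y with y | y <;>
      simp [hQdef, Matrix.transpose_apply]
    exact hAinve y x
  have hEM : E * M = 0 := by
    ext x y
    rcases y with y | y <;>
      simp [hEdef, hMdef', Matrix.mul_apply, Fintype.sum_sum_type, hcolA,
        Finset.sum_const, Finset.card_univ]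
  have hQE : Q * E = 0 := by
    ext x y
    rcases x with x | x <;>
      simp [hEdef, hQdef, Matrix.mul_apply, Fintype.sum_sum_type, hrowAinv,
        Finset.sum_sub_distrib, Finset.sum_const, Finset.card_univ, hrdef] <;>
      field_simp <;> ring
  have hQM : Q * M = M * Q := by
    have h : Q * M = (M * Q)ᵀ := by rw [transpose_mul, hQsym, hMsym]
    rw [h, hMQ, transpose_sub, transpose_one, transpose_smul, hEsym]
  have hMQM : M * Q * M = M := by
    rw [hMQ, sub_mul, one_mul, smul_mul_assoc, hEM, smul_zero, sub_zero]
  have hQMQ : Q * M * Q = Q := by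
    rw [mul_assoc, hMQ, mul_sub, mul_one, Matrix.mul_smul, hQE, smul_zero, sub_zero]
  have h3 : (M * Q)ᵀ = M * Q := by
    rw [hMQ, transpose_sub, transpose_one, transpose_smul, hEsym]
  have h4 : (Q * M)ᵀ = Q * M := by rw [hQM]; exact h3
  have hQP : Q = P := mp_unique M Q P ⟨hMQM, hQMQ, h3, h4⟩ hP
  constructor <;> rw [← hQP] <;>
    simp [hQdef, hrdef] <;> field_simp <;> ring
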